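/- If G is a graph without isolated vertices and H is a graph with γ(H) ≥ 2, then γ(G[H]) = γ_t(G), the total domination number of G. -/

import Mathlib

open SimpleGraph Finset

/-- Open neighborhood of a set: vertices having a neighbor in `S`. -/
def nbhd {V : Type*} (G : SimpleGraph V) (S : Set V) : Set V := {v | ∃ u ∈ S, G.Adj u v}

/-- Closed neighborhood of a vertex. -/
def closedNbhd {V : Type*} (G : SimpleGraph V) (v : V) : Set V := insert v (G.neighborSet v)

/-- `S` dominates vertex `v`. -/
def Dominates {V : Type*} (G : SimpleGraph V) (S : Set V) (v : V) : Prop :=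
  v ∈ S ∨ ∃ u ∈ S, G.Adj u v

/-- `D` is a dominating set of `G`. -/
def IsDomSet {V : Type*} (G : SimpleGraph V) (D : Set V) : Prop := ∀ v, Dominates G D v

/-- `D` is a minimal dominating set of `G`. -/
def IsMinDomSet {V : Type*} (G : SimpleGraph V) (D : Set V) : Prop :=
  IsDomSet G D ∧ ∀ D' ⊂ D, ¬ IsDomSet G D'

/-- `D` is an irreducible dominating set of `G`. -/
def IsIrredDomSet {V : Type*} (G : SimpleGraph V) (D : Set V) : Prop :=
  IsDomSet G D ∧ ¬ ∃ u ∈ D, IsDomSet G (D \ {u}) ∧ nbhd G D = nbhd G (D \ {u})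

/-- Lexicographic product of two simple graphs. -/
def lexProd {V W : Type*} (G : SimpleGraph V) (H : SimpleGraph W) : SimpleGraph (V × W) where
  Adj p q := G.Adj p.1 q.1 ∨ (p.1 = q.1 ∧ H.Adj p.2 q.2)
  symm := by
    constructor
    rintro p q (h | ⟨e, h⟩)
    · exact Or.inl h.symm
    · exact Or.inr ⟨e.symm, h.symm⟩
  loopless := by
    constructor
    rintro p (h | ⟨_, h⟩)
    · exact G.loopless.irrefl _ h
    · exact H.loopless.irrefl _ h

/-- Projection of `D ⊆ V(G) × V(H)` to `G`. -/
def projG {V W : Type*} (D : Set (V × W)) : Set V := {x | ∃ y, (x, y) ∈ D}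

/-- Fiber of `D ⊆ V(G) × V(H)` over `x ∈ V(G)`. -/
def projH {V W : Type*} (D : Set (V × W)) (x : V) : Set W := {y | (x, y) ∈ D}

/-- The domination number. -/
noncomputable def domNum {V : Type*} [Fintype V] (G : SimpleGraph V) : ℕ :=
  sInf {n | ∃ D : Finset V, IsDomSet G ↑D ∧ D.card = n}

/-- The total domination number. -/
noncomputable def totDomNum {V : Type*} [Fintype V] (G : SimpleGraph V) : ℕ :=
  sInf {n | ∃ D : Finset V, (∀ v, ∃ u ∈ D, G.Adj u v) ∧ D.card = n}

theorem stmt10 {V W : Type*} [Fintype V] [Fintype W]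
    (G : SimpleGraph V) (H : SimpleGraph W)
    (hiso : ∀ v : V, ∃ u, G.Adj v u)
    (hH : 2 ≤ domNum H) :
    domNum (lexProd G H) = totDomNum G := by
  classical
  have hW : Nonempty W := by
    by_contra h
    rw [not_nonempty_iff] at h
    have h0 : domNum H = 0 := by
      have : (0 : ℕ) ∈ {n | ∃ D : Finset W, IsDomSet H ↑D ∧ D.card = n} :=
        ⟨∅, fun v => (h.false v).elim, rfl⟩
      exact Nat.le_zero.mp (Nat.sInf_le this)
    omega
  obtain ⟨w₀⟩ := hW
  choose nb hnb using hiso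
  have hTD : Set.Nonempty {n | ∃ D : Finset V, (∀ v, ∃ u ∈ D, G.Adj u v) ∧ D.card = n} :=
    ⟨_, Finset.univ, fun v => ⟨nb v, mem_univ _, (hnb v).symm⟩, rfl⟩
  have hDne : Set.Nonempty {n | ∃ D : Finset (V × W),
      IsDomSet (lexProd G H) ↑D ∧ D.card = n} :=
    ⟨_, Finset.univ, fun v => Or.inl (by simp), rfl⟩
  apply le_antisymm
  · -- domNum lex ≤ totDomNum
    obtain ⟨D, hdom, hcard⟩ := Nat.sInf_mem hTD
    rw [totDomNum, ← hcard]
    apply Nat.sInf_le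
    refine ⟨D.image (fun x => (x, w₀)), ?_, ?_⟩
    · rintro ⟨x, y⟩
      obtain ⟨u, hu, hadj⟩ := hdom x
      refine Or.inr ⟨(u, w₀), ?_, Or.inl hadj⟩
      simp only [coe_image, Set.mem_image, mem_coe]
      exact ⟨u, hu, rfl⟩
    · exact card_image_of_injective _ (fun a b hab => by simpa using hab)
  · -- totDomNum ≤ domNum lex
    obtain ⟨S, hdom, hcard⟩ := Nat.sInf_mem hDne
    set P : Finset V := S.image Prod.fst with hP
    set B : Finset V := P.filter (fun x => ∀ u ∈ P, ¬ G.Adj u x) with hB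
    have hBsub : B ⊆ P := filter_subset _ _
    have hfibP : ∀ x ∈ P, 1 ≤ (S.filter (fun p => p.1 = x)).card := by
      intro x hx
      rw [hP, mem_image] at hx
      obtain ⟨p, hp, hpx⟩ := hx
      exact card_pos.mpr ⟨p, mem_filter.mpr ⟨hp, hpx⟩⟩
    have hfibB : ∀ x ∈ B, 2 ≤ (S.filter (fun p => p.1 = x)).card := by
      intro x hx
      rw [hB, mem_filter] at hx
      obtain ⟨hxP, hnoadj⟩ := hx
      have hdomH : IsDomSet H ↑((S.filter (fun p => p.1 = x)).image Prod.snd) := by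
        intro y
        rcases hdom (x, y) with hmem | ⟨⟨u, y'⟩, hu, hadj⟩
        · left
          simp only [coe_image, Set.mem_image, mem_coe, mem_filter]
          exact ⟨(x, y), ⟨hmem, rfl⟩, rfl⟩
        · rcases hadj with hG | ⟨he, hHadj⟩
          · exact absurd hG (hnoadj u (mem_image.2 ⟨(u, y'), hu, rfl⟩))
          · refine Or.inr ⟨y', ?_, hHadj⟩
            simp only [coe_image, Set.mem_image, mem_coe, mem_filter]
            exact ⟨(u, y'), ⟨hu, he⟩, rfl⟩
      calc 2 ≤ domNum H := hH
        _ ≤ ((S.filter (fun p => p.1 = x)).image Prod.snd).card :=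
            Nat.sInf_le ⟨_, hdomH, rfl⟩
        _ ≤ (S.filter (fun p => p.1 = x)).card := card_image_le
    set T : Finset V := P ∪ B.image nb with hT
    have hTtot : ∀ v, ∃ u ∈ T, G.Adj u v := by
      intro v
      by_cases hc : ∃ u ∈ P, G.Adj u v
      · obtain ⟨u, hu, hadj⟩ := hc
        exact ⟨u, mem_union_left _ hu, hadj⟩
      · push_neg at hc
        have hvP : v ∈ P := by
          rcases hdom (v, w₀) with hmem | ⟨⟨u, y'⟩, hu, hadj⟩
          · exact mem_image.2 ⟨(v, w₀), by exact_mod_cast hmem, rfl⟩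
          · rcases hadj with hG | ⟨he, _⟩
            · exact absurd hG (hc u (mem_image.2 ⟨(u, y'), by exact_mod_cast hu, rfl⟩))
            · exact mem_image.2 ⟨(u, y'), by exact_mod_cast hu, he⟩
        have hvB : v ∈ B := mem_filter.mpr ⟨hvP, hc⟩
        exact ⟨nb v, mem_union_right _ (mem_image.2 ⟨v, hvB, rfl⟩), (hnb v).symm⟩
    have hScard : S.card = ∑ x ∈ P, (S.filter (fun p => p.1 = x)).card :=
      card_eq_sum_card_fiberwise (fun p hp => mem_image.2 ⟨p, hp, rfl⟩)
    have hsum : P.card + B.card ≤ S.card := by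
      rw [hScard]
      have hsplit : ∑ x ∈ P, (S.filter (fun p => p.1 = x)).card
          = ∑ x ∈ B, (S.filter (fun p => p.1 = x)).card
            + ∑ x ∈ P \ B, (S.filter (fun p => p.1 = x)).card := by
        rw [← Finset.sum_union (Finset.sdiff_disjoint.symm), Finset.union_sdiff_of_subset hBsub]
      rw [hsplit]
      have h1 : B.card * 2 ≤ ∑ x ∈ B, (S.filter (fun p => p.1 = x)).card := by
        calc B.card * 2 = ∑ _x ∈ B, 2 := by rw [Finset.sum_const, smul_eq_mul]
          _ ≤ _ := Finset.sum_le_sum hfibB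
      have h2 : (P \ B).card ≤ ∑ x ∈ P \ B, (S.filter (fun p => p.1 = x)).card := by
        calc (P \ B).card = ∑ _x ∈ P \ B, 1 := by rw [Finset.sum_const, smul_eq_mul, mul_one]
          _ ≤ _ := Finset.sum_le_sum (fun x hx => hfibP x (mem_sdiff.mp hx).1)
      have hPc : P.card = B.card + (P \ B).card := by
        rw [add_comm, Finset.card_sdiff_add_card_eq_card hBsub]
      omega
    have hTc : T.card ≤ S.card := by
      calc T.card ≤ P.card + (B.image nb).card := card_union_le _ _
        _ ≤ P.card + B.card := by have := card_image_le (f := nb) (s := B); omega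
        _ ≤ S.card := hsum
    calc totDomNum G ≤ T.card := Nat.sInf_le ⟨T, hTtot, rfl⟩
      _ ≤ S.card := hTc
      _ = domNum (lexProd G H) := hcard
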